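/- The quotient space X_S = S³ / ι is simply connected. -/

import Mathlib

/-- The unit 3-sphere in `EuclideanSpace ℝ (Fin 4)`. -/
abbrev S3 : Type := ↥(Metric.sphere (0 : EuclideanSpace ℝ (Fin 4)) 1)

/-- The involution `ι(x₁, x₂, x₃, x₄) = (−x₁, −x₂, −x₃, x₄)` on the unit 3-sphere. -/
noncomputable def sphereInv (x : S3) : S3 :=
  ⟨(WithLp.toLp 2 (fun i => if i = 3 then (x : EuclideanSpace ℝ (Fin 4)) i
      else -(x : EuclideanSpace ℝ (Fin 4)) i) : EuclideanSpace ℝ (Fin 4)), by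
    have hx := x.2
    rw [mem_sphere_zero_iff_norm] at hx ⊢
    rw [EuclideanSpace.norm_eq] at hx ⊢
    simpa [apply_ite (‖·‖)] using hx⟩

/-- The quotient space `X_S = S³ / ι`, i.e. the quotient of the 3-sphere by the
equivalence relation identifying each point `p` with `ι p`, with the quotient topology. -/
abbrev XS : Type := Quot (fun p q : S3 => sphereInv p = q)

section GeneralTopology

open Set unitInterval CategoryTheory

attribute [local instance] Path.Homotopic.setoid

variable {X : Type*} [TopologicalSpace X]

/-- convex combination inside the unit interval -/
def combI (s u v : I) : I :=
  ⟨(1 - (s:ℝ)) * u + s * v, by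
    constructor
    · have := s.2.1; have := s.2.2; have := u.2.1; have := v.2.1
      nlinarith
    · have := s.2.1; have := s.2.2; have := u.2.1; have := u.2.2
      have := v.2.1; have := v.2.2
      nlinarith⟩

lemma combI_zero (u v : I) : combI 0 u v = u := by
  apply Subtype.ext; simp [combI]

lemma combI_one (u v : I) : combI 1 u v = v := by
  apply Subtype.ext; simp [combI]

lemma combI_self (s u : I) : combI s u u = u := by
  apply Subtype.ext; simp [combI]; ring

lemma continuous_combI : Continuous fun p : I × I × I => combI p.1 p.2.1 p.2.2 := by
  apply Continuous.subtype_mk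
  fun_prop

lemma combI_mem_Icc {a b : I} (hab : a ≤ b) (s : I) : combI s a b ∈ Icc a b := by
  have hs1 := s.2.1; have hs2 := s.2.2
  have h : (a:ℝ) ≤ b := hab
  constructor
  · show (a:ℝ) ≤ (1 - s) * a + s * b
    nlinarith
  · show ((1 - (s:ℝ)) * a + s * b : ℝ) ≤ b
    nlinarith

/-- the affine path in `I` from `a` to `b` -/
def pathI (a b : I) : Path a b where
  toFun s := combI s a b
  continuous_toFun := by
    have := continuous_combI
    exact Continuous.subtype_mk (by fun_prop) _
  source' := combI_zero a b
  target' := combI_one a b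

lemma pathI_apply (a b : I) (s : I) : pathI a b s = combI s a b := rfl

/-- subpath of `γ` from `γ a` to `γ b` -/
def Path.seg {x y : X} (γ : Path x y) (a b : I) : Path (γ a) (γ b) :=
  (pathI a b).map γ.continuous

lemma Path.seg_apply {x y : X} (γ : Path x y) (a b s : I) :
    γ.seg a b s = γ (combI s a b) := rfl

/-- Two paths which are reparametrizations of a common path, with matching endpoints
of the parametrizations, are homotopic. -/
theorem homotopic_of_reparam {x y a b : X} (γ : Path x y) {φ ψ : I → I}
    (hφ : Continuous φ) (hψ : Continuous ψ) (h0 : φ 0 = ψ 0) (h1 : φ 1 = ψ 1)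
    (p q : Path a b) (hp : ∀ s, p s = γ (φ s)) (hq : ∀ s, q s = γ (ψ s)) :
    p.Homotopic q := by
  refine ⟨⟨⟨⟨fun su => γ (combI su.1 (φ su.2) (ψ su.2)), ?_⟩, ?_, ?_⟩, ?_⟩⟩
  · apply γ.continuous.comp
    apply Continuous.subtype_mk
    fun_prop
  · intro u
    simp only [combI_zero]
    exact (hp u).symm
  · intro u
    simp only [combI_one]
    exact (hq u).symm
  · intro t s hs
    have key : ∀ s : I, φ s = ψ s → γ (combI t (φ s) (ψ s)) = p s := by
      intro s h
      rw [h, combI_self, ← h, hp s]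
    rcases hs with hs | hs
    · subst hs; exact key 0 h0
    · simp only [mem_singleton_iff] at hs; subst hs; exact key 1 h1

theorem Path.seg_trans {x y : X} (γ : Path x y) (a b c : I) :
    (γ.seg a c).Homotopic ((γ.seg a b).trans (γ.seg b c)) := by
  apply homotopic_of_reparam (φ := ⇑(pathI a c)) (ψ := ⇑((pathI a b).trans (pathI b c))) γ
    (pathI a c).continuous ((pathI a b).trans (pathI b c)).continuous
  · simp
  · simp
  · intro s; rfl
  · intro s
    rw [Path.trans_apply, Path.trans_apply]
    split_ifs <;> rfl

/-- Lift a path with values in `W` to the subtype `W`. -/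
def Path.subtypePath {x y : X} (p : Path x y) {W : Set X} (hp : ∀ s, p s ∈ W)
    (hx : x ∈ W) (hy : y ∈ W) : Path (⟨x, hx⟩ : W) ⟨y, hy⟩ where
  toFun s := ⟨p s, hp s⟩
  continuous_toFun := p.continuous.subtype_mk _
  source' := Subtype.ext p.source
  target' := Subtype.ext p.target

/-- Two paths with the same endpoints lying in a simply connected subset are homotopic. -/
theorem homotopic_in {W : Set X} (hW : SimplyConnectedSpace W) {x y : X}
    (p q : Path x y) (hp : ∀ s, p s ∈ W) (hq : ∀ s, q s ∈ W) : p.Homotopic q := by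
  have hx : x ∈ W := by have := hp 0; rwa [p.source] at this
  have hy : y ∈ W := by have := hp 1; rwa [p.target] at this
  have h := @SimplyConnectedSpace.paths_homotopic _ _ hW _ _
    (p.subtypePath hp hx hy) (q.subtypePath hq hx hy)
  have h2 := h.map ⟨Subtype.val, continuous_subtype_val⟩
  have e1 : ((p.subtypePath hp hx hy).map continuous_subtype_val) = p := by
    ext t; rfl
  have e2 : ((q.subtypePath hq hx hy).map continuous_subtype_val) = q := by
    ext t; rfl
  rwa [e1, e2] at h2

theorem path_cast_rfl {x y : X} (r : Path x y) : r.cast rfl rfl = r := by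
  ext t; rfl

theorem Path.Homotopic.cast' {x y x' y' : X} {p q : Path x y} (h : p.Homotopic q)
    (hx : x' = x) (hy : y' = y) : (p.cast hx hy).Homotopic (q.cast hx hy) := by
  subst hx; subst hy
  rwa [path_cast_rfl, path_cast_rfl]

theorem simplyConnectedSpace_of_cover {U V : Set X} (hUo : IsOpen U) (hVo : IsOpen V)
    (hUV : U ∪ V = univ) (hU : SimplyConnectedSpace U) (hV : SimplyConnectedSpace V)
    (hI : IsPathConnected (U ∩ V)) : SimplyConnectedSpace X := by
  obtain ⟨x₀, hx₀I, -⟩ := id hI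
  have hUpc : IsPathConnected U := by
    haveI := hU
    rw [isPathConnected_iff_pathConnectedSpace]
    infer_instance
  have hVpc : IsPathConnected V := by
    haveI := hV
    rw [isPathConnected_iff_pathConnectedSpace]
    infer_instance
  -- good paths from x₀ to arbitrary points
  have exGood : ∀ z : X, ∃ p : Path x₀ z,
      (z ∈ U → ∀ s, p s ∈ U) ∧ (z ∈ V → ∀ s, p s ∈ V) := by
    intro z
    have hz : z ∈ U ∪ V := hUV ▸ mem_univ z
    by_cases hzU : z ∈ U <;> by_cases hzV : z ∈ V
    · obtain ⟨p, hp⟩ := hI.joinedIn x₀ hx₀I z ⟨hzU, hzV⟩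
      exact ⟨p, fun _ s => (hp s).1, fun _ s => (hp s).2⟩
    · obtain ⟨p, hp⟩ := hUpc.joinedIn x₀ hx₀I.1 z hzU
      exact ⟨p, fun _ s => hp s, fun h => absurd h hzV⟩
    · obtain ⟨p, hp⟩ := hVpc.joinedIn x₀ hx₀I.2 z hzV
      exact ⟨p, fun h => absurd h hzU, fun _ s => hp s⟩
    · rcases hz with h | h
      · exact absurd h hzU
      · exact absurd h hzV
  -- every loop at x₀ is nullhomotopic
  have loopTrivial : ∀ γ : Path x₀ x₀, γ.Homotopic (Path.refl x₀) := by
    intro γ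
    set c : Bool → Set I := fun b => γ ⁻¹' (if b then U else V) with hc
    have hc₁ : ∀ b, IsOpen (c b) := by
      intro b
      cases b <;> simp only [hc, if_true, if_false] <;>
        [exact hVo.preimage γ.continuous; exact hUo.preimage γ.continuous]
    have hc₂ : univ ⊆ ⋃ b, c b := by
      intro s _
      have : γ s ∈ U ∪ V := hUV ▸ mem_univ _
      rcases this with h | h
      · exact mem_iUnion.2 ⟨true, h⟩
      · exact mem_iUnion.2 ⟨false, h⟩
    obtain ⟨t, ht0, htmono, ⟨N, htN⟩, hcov⟩ :=
      exists_monotone_Icc_subset_open_cover_unitInterval hc₁ hc₂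
    -- the key induction
    have main : ∀ n : ℕ, ∀ p : Path x₀ (γ (t n)),
        ((γ (t n) ∈ U → ∀ s, p s ∈ U) ∧ (γ (t n) ∈ V → ∀ s, p s ∈ V)) →
        ((γ.seg 0 (t n)).cast γ.source.symm rfl).Homotopic p := by
      intro n
      induction n with
      | zero =>
        intro p hp
        have hγt0 : γ (t 0) ∈ U := by rw [ht0, γ.source]; exact hx₀I.1
        apply homotopic_in hU
        · intro s
          show γ.seg 0 (t 0) s ∈ U
          rw [Path.seg_apply]
          have : combI s 0 (t 0) = 0 := by
            apply Subtype.ext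
            have h0 : (t 0 : ℝ) = 0 := congrArg Subtype.val ht0
            simp [combI, h0]
          rw [this, γ.source]
          exact hx₀I.1
        · exact hp.1 hγt0
      | succ n ih =>
        intro p hp
        have hWex : ∃ W : Set X, SimplyConnectedSpace W ∧
            (∀ s : I, s ∈ Icc (t n) (t (n+1)) → γ s ∈ W) ∧
            ∀ (z : X) (p' : Path x₀ z), (z ∈ U → ∀ s, p' s ∈ U) →
              (z ∈ V → ∀ s, p' s ∈ V) → z ∈ W → ∀ s, p' s ∈ W := by
          obtain ⟨b, hb⟩ := hcov n
          cases b
          · refine ⟨V, hV, fun s hs => ?_, fun z p' h1 h2 hz s => h2 hz s⟩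
            have := hb hs
            simpa [hc] using this
          · refine ⟨U, hU, fun s hs => ?_, fun z p' h1 h2 hz s => h1 hz s⟩
            have := hb hs
            simpa [hc] using this
        obtain ⟨W, hWsc, hsub, hWgood⟩ := hWex
        have hmono : t n ≤ t (n + 1) := htmono (Nat.le_succ n)
        have hγtn : γ (t n) ∈ W := hsub _ ⟨le_refl _, hmono⟩
        have hγtn1 : γ (t (n+1)) ∈ W := hsub _ ⟨hmono, le_refl _⟩
        obtain ⟨β, hβ⟩ := exGood (γ (t n))
        have hβW : ∀ s, β s ∈ W := hWgood _ β hβ.1 hβ.2 hγtn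
        have hpW : ∀ s, p s ∈ W := hWgood _ p hp.1 hp.2 hγtn1
        have hσW : ∀ s, γ.seg (t n) (t (n+1)) s ∈ W := by
          intro s
          rw [Path.seg_apply]
          exact hsub _ (combI_mem_Icc hmono s)
        have ihβ := ih β hβ
        -- step 1: subdivision
        have step1 := γ.seg_trans 0 (t n) (t (n+1))
        have step1' : ((γ.seg 0 (t (n+1))).cast γ.source.symm rfl).Homotopic
            (((γ.seg 0 (t n)).cast γ.source.symm rfl).trans (γ.seg (t n) (t (n+1)))) := by
          have := step1.cast' γ.source.symm (rfl : γ (t (n+1)) = γ (t (n+1)))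
          refine this.trans ?_
          have e : ((γ.seg 0 (t n)).trans (γ.seg (t n) (t (n+1)))).cast γ.source.symm rfl
              = ((γ.seg 0 (t n)).cast γ.source.symm rfl).trans (γ.seg (t n) (t (n+1))) := by
            ext s; rfl
          rw [e]
        -- step 2: replace initial part by β
        have step2 : (((γ.seg 0 (t n)).cast γ.source.symm rfl).trans
            (γ.seg (t n) (t (n+1)))).Homotopic (β.trans (γ.seg (t n) (t (n+1)))) :=
          Path.Homotopic.hcomp ihβ (Path.Homotopic.refl _)
        -- step 3: both in W
        have step3 : (β.trans (γ.seg (t n) (t (n+1)))).Homotopic p := by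
          apply homotopic_in hWsc
          · intro s
            rw [Path.trans_apply]
            split_ifs <;> [exact hβW _; exact hσW _]
          · exact hpW
        exact (step1'.trans step2).trans step3
    -- conclude
    have htN1 : t N = 1 := htN N le_rfl
    have hend : γ (t N) = x₀ := by rw [htN1]; exact γ.target
    have hmain := main N ((Path.refl x₀).cast rfl hend)
      (by constructor <;> intro _ s <;> [exact hx₀I.1; exact hx₀I.2])
    have e1 : γ = ((γ.seg 0 (t N)).cast γ.source.symm rfl).cast rfl hend.symm := by
      ext s
      show γ s = γ (combI s 0 (t N))
      congr 1
      apply Subtype.ext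
      have h1 : (t N : ℝ) = 1 := congrArg Subtype.val htN1
      simp [combI, h1]
    have e2 : Path.refl x₀ = (((Path.refl x₀).cast rfl hend).cast rfl hend.symm :
        Path x₀ x₀) := by
      ext s; rfl
    rw [e1, e2]
    exact hmain.cast' rfl hend.symm
  -- path connectedness
  have joined₀ : ∀ x : X, Joined x₀ x := by
    intro x
    have hx : x ∈ U ∪ V := hUV ▸ mem_univ x
    rcases hx with h | h
    · exact (hUpc.joinedIn x₀ hx₀I.1 x h).joined
    · exact (hVpc.joinedIn x₀ hx₀I.2 x h).joined
  have pcs : PathConnectedSpace X :=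
    ⟨⟨x₀⟩, fun x y => (joined₀ x).symm.trans (joined₀ y)⟩
  -- homotopy of arbitrary paths via the fundamental groupoid
  have homeq : ∀ (x y : X) (p q : Path x y), p.Homotopic q := by
    intro x y p q
    obtain ⟨δ⟩ := joined₀ x
    let P : (⟨x⟩ : FundamentalGroupoid X) ⟶ ⟨y⟩ := ⟦p⟧
    let Q : (⟨x⟩ : FundamentalGroupoid X) ⟶ ⟨y⟩ := ⟦q⟧
    let D : (⟨x₀⟩ : FundamentalGroupoid X) ⟶ ⟨x⟩ := ⟦δ⟧
    have key : ∀ E : (⟨x₀⟩ : FundamentalGroupoid X) ⟶ (⟨x₀⟩ : FundamentalGroupoid X),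
        E = 𝟙 _ := by
      intro E
      obtain ⟨l, rfl⟩ := Quotient.exists_rep E
      rw [FundamentalGroupoid.id_eq_path_refl]
      exact Quotient.sound (loopTrivial l)
    have h1 : D ≫ P ≫ inv (D ≫ Q) = 𝟙 _ := key _
    have h2 : P ≫ inv (D ≫ Q) = inv D := by
      rw [← cancel_epi D, h1, IsIso.hom_inv_id]
    have h3 : P = Q := by
      have : P = inv D ≫ (D ≫ Q) := by
        rw [← h2, Category.assoc, IsIso.inv_hom_id, Category.comp_id]
      rw [this, IsIso.inv_hom_id_assoc]
    exact Quotient.exact h3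
  rw [simply_connected_iff_paths_homotopic']
  exact ⟨pcs, fun {x y} p q => homeq x y p q⟩

end GeneralTopology

open Set Metric

noncomputable section

local notation "E4" => EuclideanSpace ℝ (Fin 4)

namespace XSP

lemma unitS3 (x : S3) : ‖(x : E4)‖ = 1 := mem_sphere_zero_iff_norm.1 x.2

/-- the reflection map -/
def Jmap (x : E4) : E4 := (2 * x 3) • EuclideanSpace.single 3 (1:ℝ) - x

lemma Jmap_apply (x : E4) (i : Fin 4) : Jmap x i = if i = 3 then x i else -(x i) := by
  simp only [Jmap, PiLp.sub_apply, PiLp.smul_apply, EuclideanSpace.single_apply, smul_eq_mul]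
  split_ifs with h
  · subst h; ring
  · ring

lemma sphereInv_coe (x : S3) : ((sphereInv x : S3) : E4) = Jmap (x : E4) := by
  ext i
  rw [Jmap_apply]
  show (if i = 3 then (x : E4) i else -(x : E4) i) = _
  rfl

lemma Jmap_inv (x : E4) : Jmap (Jmap x) = x := by
  ext i
  rw [Jmap_apply, Jmap_apply]
  split_ifs <;> ring

lemma sphereInv_inv (x : S3) : sphereInv (sphereInv x) = x :=
  Subtype.ext (by rw [sphereInv_coe, sphereInv_coe, Jmap_inv])

lemma continuous_Jmap : Continuous Jmap := by
  unfold Jmap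
  exact ((continuous_const.mul (PiLp.continuous_apply (p := 2) (β := fun _ : Fin 4 => ℝ) 3)).smul continuous_const).sub
    continuous_id

lemma continuous_sphereInv : Continuous sphereInv := by
  have h : Continuous fun x : S3 => Jmap (x : E4) :=
    continuous_Jmap.comp continuous_subtype_val
  have he : (fun x : S3 => (WithLp.toLp 2 (fun i => if i = 3 then (x : E4) i else -(x : E4) i) : E4)) =
      fun x : S3 => Jmap (x : E4) := funext fun x => sphereInv_coe x
  exact Continuous.subtype_mk (he ▸ h) _

lemma norm_Jmap (x : E4) : ‖Jmap x‖ = ‖x‖ := by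
  rw [EuclideanSpace.norm_eq, EuclideanSpace.norm_eq]
  congr 1
  apply Finset.sum_congr rfl
  intro i _
  rw [Jmap_apply]
  split_ifs <;> simp

/-- linear interpolation -/
def itp (x y : E4) (s : ℝ) : E4 := (1 - s) • x + s • y

/-- normalized linear interpolation -/
def nitp (x y : E4) (s : ℝ) : E4 := ‖itp x y s‖⁻¹ • itp x y s

lemma norm_itp_sq (x y : E4) (hx : ‖x‖ = 1) (hy : ‖y‖ = 1) (s : ℝ) :
    ‖itp x y s‖ ^ 2 = (1 - s) ^ 2 + s ^ 2 + 2 * s * (1 - s) * (inner ℝ x y : ℝ) := by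
  rw [itp, @norm_add_sq_real, norm_smul, norm_smul, real_inner_smul_left,
    real_inner_smul_right, hx, hy]
  simp only [Real.norm_eq_abs, mul_one]
  rw [sq_abs, sq_abs]
  ring

lemma norm_itp_pos (x y : E4) (hx : ‖x‖ = 1) (hy : ‖y‖ = 1)
    (hc : -1 < (inner ℝ x y : ℝ)) {s : ℝ} (hs0 : 0 ≤ s) (hs1 : s ≤ 1) :
    0 < ‖itp x y s‖ := by
  have h2 : 0 < ‖itp x y s‖ ^ 2 := by
    rw [norm_itp_sq x y hx hy]
    nlinarith [sq_nonneg (1 - 2 * s), mul_nonneg (mul_nonneg hs0 (by linarith : (0:ℝ) ≤ 1 - s))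
      (by linarith : (0:ℝ) ≤ 1 + (inner ℝ x y : ℝ))]
  nlinarith [norm_nonneg (itp x y s)]

lemma nitp_mem (x y : E4) (h : 0 < ‖itp x y s‖) : nitp x y s ∈ sphere (0 : E4) 1 := by
  rw [mem_sphere_zero_iff_norm, nitp]
  exact norm_smul_inv_norm (by simpa [norm_pos_iff] using h)

lemma nitp_zero (x y : E4) (hx : ‖x‖ = 1) : nitp x y 0 = x := by
  simp [nitp, itp, hx]

lemma nitp_one (x y : E4) (hy : ‖y‖ = 1) : nitp x y 1 = y := by
  simp [nitp, itp, hy]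

lemma nitp_apply (x y : E4) (s : ℝ) (i : Fin 4) :
    nitp x y s i = ‖itp x y s‖⁻¹ * ((1 - s) * x i + s * y i) := by
  simp [nitp, itp, mul_add]

lemma Jmap_itp (x y : E4) (s : ℝ) : Jmap (itp x y s) = itp (Jmap x) (Jmap y) s := by
  ext i
  rw [Jmap_apply]
  simp only [itp, PiLp.add_apply, PiLp.smul_apply, smul_eq_mul, Jmap_apply]
  split_ifs <;> ring

lemma Jmap_nitp (x y : E4) (s : ℝ) : Jmap (nitp x y s) = nitp (Jmap x) (Jmap y) s := by
  have hsm : ∀ (a : ℝ) (v : E4), Jmap (a • v) = a • Jmap v := by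
    intro a v
    ext i
    rw [Jmap_apply]
    simp only [PiLp.smul_apply, smul_eq_mul, Jmap_apply]
    split_ifs <;> ring
  rw [nitp, hsm, Jmap_itp, nitp, ← Jmap_itp, norm_Jmap]

/-- one-sided ratio bound -/
lemma ratio_gt_neg_half {num nv : ℝ} (hnv : 0 < nv) (h : -nv < 2 * num) :
    -(1/2) < nv⁻¹ * num := by
  have h2 : nv⁻¹ * (-(nv/2)) < nv⁻¹ * num :=
    mul_lt_mul_of_pos_left (by linarith) (inv_pos.2 hnv)
  have h3 : nv⁻¹ * (-(nv/2)) = -(1/2) := by field_simp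
  linarith

/-- from squared bound to two-sided linear bounds -/
lemma two_sided_of_sq {num nv : ℝ} (hnv : 0 < nv) (hsq : (2*num)^2 < nv^2) :
    -nv < 2*num ∧ 2*num < nv := by
  have h2 : 0 < (nv - 2*num) * (nv + 2*num) := by nlinarith
  constructor
  · by_contra h
    push_neg at h
    have : (nv - 2*num) * (nv + 2*num) ≤ 0 :=
      mul_nonpos_of_nonneg_of_nonpos (by linarith) (by linarith)
    linarith
  · by_contra h
    push_neg at h
    have : (nv - 2*num) * (nv + 2*num) ≤ 0 :=
      mul_nonpos_of_nonpos_of_nonneg (by linarith) (by linarith)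
    linarith

lemma abs_ratio_lt_half {num nv : ℝ} (hnv : 0 < nv) (hsq : (2*num)^2 < nv^2) :
    |nv⁻¹ * num| < 1/2 := by
  obtain ⟨h1, h2⟩ := two_sided_of_sq hnv hsq
  rw [abs_lt]
  constructor
  · have := ratio_gt_neg_half hnv h1
    linarith
  · have := ratio_gt_neg_half hnv (show -nv < 2 * (-num) by linarith)
    have e : nv⁻¹ * -num = -(nv⁻¹ * num) := by ring
    rw [e] at this
    linarith


local notation "qm" => Quot.mk (fun p q : S3 => sphereInv p = q)

lemma quot_mk_eq_iff (a b : S3) : qm a = qm b ↔ a = b ∨ sphereInv a = b := by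
  rw [Quot.eq]
  constructor
  · intro h
    induction h with
    | rel x y h => exact Or.inr h
    | refl x => exact Or.inl rfl
    | symm x y h ih =>
      rcases ih with rfl | h2
      · exact Or.inl rfl
      · exact Or.inr (by rw [← h2, sphereInv_inv])
    | trans x y z h1 h2 ih1 ih2 =>
      rcases ih1 with rfl | h1' <;> rcases ih2 with rfl | h2'
      · exact Or.inl rfl
      · exact Or.inr h2'
      · exact Or.inr h1'
      · exact Or.inl (by rw [← h2', ← h1', sphereInv_inv])
  · rintro (rfl | h)
    · exact Relation.EqvGen.refl _
    · exact Relation.EqvGen.rel _ _ h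

lemma isOpenMap_qm : IsOpenMap (qm : S3 → XS) := by
  intro s hs
  rw [← isQuotientMap_quot_mk.isOpen_preimage]
  have he : qm ⁻¹' (qm '' s) = s ∪ sphereInv ⁻¹' s := by
    ext x
    simp only [mem_preimage, mem_image, mem_union]
    constructor
    · rintro ⟨y, hy, hxy⟩
      rcases (quot_mk_eq_iff y x).1 hxy with rfl | h
      · exact Or.inl hy
      · right
        show sphereInv x ∈ s
        rw [← h, sphereInv_inv]
        exact hy
    · rintro (hx | hx)
      · exact ⟨x, hx, rfl⟩
      · exact ⟨sphereInv x, hx, (quot_mk_eq_iff _ _).2 (Or.inr (sphereInv_inv x))⟩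
  rw [he]
  exact hs.union (hs.preimage continuous_sphereInv)

lemma isOpenQuotientMap_qm : IsOpenQuotientMap (qm : S3 → XS) :=
  ⟨fun u => Quot.exists_rep u, continuous_quot_mk, isOpenMap_qm⟩

/-- the fourth coordinate descends to the quotient -/
def h4 : XS → ℝ := Quot.lift (fun x : S3 => (x : E4) 3) (by
  intro p q h
  rw [← h]
  show (p : E4) 3 = ((sphereInv p : S3) : E4) 3
  rw [sphereInv_coe, Jmap_apply]
  simp)

lemma continuous_h4 : Continuous h4 :=
  continuous_quot_lift _ ((PiLp.continuous_apply (p := 2) (β := fun _ : Fin 4 => ℝ) 3).comp continuous_subtype_val)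

lemma h4_qm (x : S3) : h4 (qm x) = (x : E4) 3 := rfl

/-- open cap in the quotient -/
def capXS (ε : ℝ) : Set XS := {u | -(1/2) < ε * h4 u}

/-- open cap in the sphere -/
def capS (ε : ℝ) : Set S3 := {x | -(1/2) < ε * (x : E4) 3}

lemma isOpen_capXS (ε : ℝ) : IsOpen (capXS ε) :=
  isOpen_Ioi.preimage (continuous_const.mul continuous_h4)

lemma isOpen_capS (ε : ℝ) : IsOpen (capS ε) :=
  isOpen_Ioi.preimage (continuous_const.mul
    ((PiLp.continuous_apply (p := 2) (β := fun _ : Fin 4 => ℝ) 3).comp continuous_subtype_val))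

section cap

variable {ε : ℝ} (hε : ε = 1 ∨ ε = -1)

lemma eps_sq (hε : ε = 1 ∨ ε = -1) : ε * ε = 1 := by rcases hε with rfl | rfl <;> norm_num

/-- the pole -/
def pole (ε : ℝ) : E4 := EuclideanSpace.single 3 ε

lemma norm_pole (hε : ε = 1 ∨ ε = -1) : ‖pole ε‖ = 1 := by
  rw [pole, EuclideanSpace.norm_single]
  rcases hε with rfl | rfl <;> norm_num

lemma pole_apply (i : Fin 4) : pole ε i = if i = 3 then ε else 0 :=
  EuclideanSpace.single_apply _ _ _

lemma Jmap_pole : Jmap (pole ε) = pole ε := by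
  ext i
  rw [Jmap_apply, pole_apply]
  split_ifs <;> simp

lemma inner_pole (x : E4) : (inner ℝ x (pole ε) : ℝ) = ε * x 3 := by
  rw [pole, EuclideanSpace.inner_single_right]
  simp [mul_comm]

/-- the contraction toward the pole stays in the cap, and the interpolation never vanishes -/
lemma cap_stable (hε : ε = 1 ∨ ε = -1) (x : S3) (hx : -(1/2) < ε * (x : E4) 3)
    {s : ℝ} (hs0 : 0 ≤ s) (hs1 : s ≤ 1) :
    0 < ‖itp (x : E4) (pole ε) s‖ ∧ -(1/2) < ε * nitp (x : E4) (pole ε) s 3 := by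
  set c : ℝ := ε * (x : E4) 3 with hcdef
  have hinner : (inner ℝ (x : E4) (pole ε) : ℝ) = c := inner_pole _
  have hcabs : |c| ≤ 1 := by
    rw [← hinner]
    have := abs_real_inner_le_norm (x : E4) (pole ε)
    rwa [unitS3 x, norm_pole hε, one_mul] at this
  have hvpos : 0 < ‖itp (x : E4) (pole ε) s‖ :=
    norm_itp_pos _ _ (unitS3 x) (norm_pole hε) (by rw [hinner]; linarith) hs0 hs1
  refine ⟨hvpos, ?_⟩
  have hvsq : ‖itp (x : E4) (pole ε) s‖ ^ 2 = (1-s)^2 + s^2 + 2*s*(1-s)*c := by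
    rw [norm_itp_sq _ _ (unitS3 x) (norm_pole hε), hinner]
  set nv : ℝ := ‖itp (x : E4) (pole ε) s‖ with hnv
  set num : ℝ := (1-s)*c + s with hnumdef
  have hA : ε * ((1-s) * (x : E4) 3 + s*ε) = num := by
    rw [hnumdef, hcdef]
    linear_combination s * (eps_sq hε)
  have hcoord : ε * nitp (x : E4) (pole ε) s 3 = nv⁻¹ * num := by
    rw [nitp_apply, pole_apply]
    simp only [if_pos (rfl : (3:Fin 4) = 3)]
    calc ε * (nv⁻¹ * ((1-s) * (x : E4) 3 + s*ε))
        = nv⁻¹ * (ε * ((1-s) * (x : E4) 3 + s*ε)) := by ring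
      _ = nv⁻¹ * num := by rw [hA]
  rw [hcoord]
  rcases le_or_gt 0 num with hnum | hnum
  · have h0 : 0 ≤ nv⁻¹ * num := mul_nonneg (inv_nonneg.2 hvpos.le) hnum
    linarith
  · have hs1' : s < 1 := by
      rcases lt_or_eq_of_le hs1 with h | h
      · exact h
      · exfalso
        rw [hnumdef, h] at hnum
        norm_num at hnum
    have hcneg : c < 0 := by
      by_contra h
      push_neg at h
      have := mul_nonneg (by linarith : (0:ℝ) ≤ 1-s) h
      rw [hnumdef] at hnum
      nlinarith
    have hc2 : c^2 < 1/4 := by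
      nlinarith [mul_pos (show (0:ℝ) < c + 1/2 by linarith) (show (0:ℝ) < 1/2 - c by linarith)]
    have h1 : -num ≤ (1-s)*(-c) := by
      rw [hnumdef]
      nlinarith
    have hnum2 : num^2 ≤ (1-s)^2 * c^2 := by
      have := mul_self_le_mul_self (by linarith : (0:ℝ) ≤ -num) h1
      nlinarith
    have hsq : (2*num)^2 < nv^2 := by
      rw [hvsq]
      nlinarith [hnum2, mul_pos (mul_pos (sub_pos.2 hs1') (sub_pos.2 hs1'))
        (show (0:ℝ) < 1 - 4*c^2 by nlinarith)]
    exact ratio_gt_neg_half hvpos (two_sided_of_sq hvpos hsq).1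


end cap

/-- the projection from the spherical cap to the quotient cap -/
def qCap (ε : ℝ) : ↥(capS ε) → ↥(capXS ε) := fun x =>
  ⟨qm x.1, by
    show -(1/2) < ε * h4 (qm x.1)
    rw [h4_qm]
    exact x.2⟩

lemma qCap_surj (ε : ℝ) : Function.Surjective (qCap ε) := by
  rintro ⟨u, hu⟩
  obtain ⟨x, hx⟩ := Quot.exists_rep u
  have hmem : x ∈ capS ε := by
    show -(1/2) < ε * (x : E4) 3
    rw [← h4_qm x, hx]
    exact hu
  exact ⟨⟨x, hmem⟩, Subtype.ext hx⟩

lemma qCap_cont (ε : ℝ) : Continuous (qCap ε) :=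
  (continuous_quot_mk.comp continuous_subtype_val).subtype_mk _

lemma qCap_open (ε : ℝ) : IsOpenMap (qCap ε) := by
  intro s hs
  rw [isOpen_induced_iff] at hs ⊢
  obtain ⟨o, ho, rfl⟩ := hs
  refine ⟨qm '' (o ∩ capS ε), isOpenMap_qm _ (ho.inter (isOpen_capS ε)), ?_⟩
  ext ⟨u, hu⟩
  simp only [mem_preimage, mem_image]
  constructor
  · rintro ⟨x, ⟨hxo, hxc⟩, hxu⟩
    exact ⟨⟨x, hxc⟩, hxo, Subtype.ext hxu⟩
  · rintro ⟨⟨x, hxc⟩, hxo, hxu⟩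
    exact ⟨x, ⟨hxo, hxc⟩, congrArg Subtype.val hxu⟩

lemma qCap_oqm (ε : ℝ) : IsOpenQuotientMap (qCap ε) :=
  ⟨qCap_surj ε, qCap_cont ε, qCap_open ε⟩

section contraction

variable {ε : ℝ}

/-- the contraction of the spherical cap toward the pole -/
def GS (hε : ε = 1 ∨ ε = -1) : ↥(capS ε) × unitInterval → ↥(capS ε) := fun p =>
  ⟨⟨nitp (p.1.1 : E4) (pole ε) p.2,
      nitp_mem _ _ (cap_stable hε p.1.1 p.1.2 p.2.2.1 p.2.2.2).1⟩,
    (cap_stable hε p.1.1 p.1.2 p.2.2.1 p.2.2.2).2⟩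

lemma GS_cont (hε : ε = 1 ∨ ε = -1) : Continuous (GS hε) := by
  apply Continuous.subtype_mk
  apply Continuous.subtype_mk
  have hbase : Continuous fun p : ↥(capS ε) × unitInterval =>
      itp (p.1.1 : E4) (pole ε) p.2 := by
    unfold itp
    apply Continuous.add
    · exact (continuous_const.sub
        (continuous_subtype_val.comp continuous_snd)).smul
        (continuous_subtype_val.comp (continuous_subtype_val.comp continuous_fst))
    · exact (continuous_subtype_val.comp continuous_snd).smul continuous_const
  have hnz : ∀ p : ↥(capS ε) × unitInterval,
      ‖itp (p.1.1 : E4) (pole ε) p.2‖ ≠ 0 :=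
    fun p => (cap_stable hε p.1.1 p.1.2 p.2.2.1 p.2.2.2).1.ne'
  exact (hbase.norm.inv₀ hnz).smul hbase

/-- equivariance of the contraction -/
lemma GS_equivariant (hε : ε = 1 ∨ ε = -1) (x x' : ↥(capS ε)) (s : unitInterval)
    (h : sphereInv x.1 = x'.1) :
    sphereInv (GS hε (x, s)).1 = (GS hε (x', s)).1 := by
  apply Subtype.ext
  rw [sphereInv_coe]
  show Jmap (nitp (x.1 : E4) (pole ε) s) = nitp (x'.1 : E4) (pole ε) s
  rw [Jmap_nitp, Jmap_pole, ← sphereInv_coe, h]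

lemma qCap_GS_eq (hε : ε = 1 ∨ ε = -1) (x x' : ↥(capS ε)) (s : unitInterval)
    (h : qCap ε x = qCap ε x') :
    qCap ε (GS hε (x, s)) = qCap ε (GS hε (x', s)) := by
  have h1 : qm x.1 = qm x'.1 := congrArg Subtype.val h
  rcases (quot_mk_eq_iff _ _).1 h1 with he | he
  · have : x = x' := Subtype.ext he
    rw [this]
  · apply Subtype.ext
    show qm (GS hε (x, s)).1 = qm (GS hε (x', s)).1
    rw [← GS_equivariant hε x x' s he]
    exact Quot.sound (r := fun p q : S3 => sphereInv p = q) rfl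

/-- the contraction on the quotient cap -/
noncomputable def FC (hε : ε = 1 ∨ ε = -1) :
    ↥(capXS ε) × unitInterval → ↥(capXS ε) := fun p =>
  qCap ε (GS hε (Function.surjInv (qCap_surj ε) p.1, p.2))

lemma FC_eq (hε : ε = 1 ∨ ε = -1) (x : ↥(capS ε)) (s : unitInterval) :
    FC hε (qCap ε x, s) = qCap ε (GS hε (x, s)) :=
  qCap_GS_eq hε _ x s (Function.surjInv_eq (qCap_surj ε) _)

lemma FC_cont (hε : ε = 1 ∨ ε = -1) : Continuous (FC hε) := by
  have hOQ : IsOpenQuotientMap (Prod.map (qCap ε) (id : unitInterval → unitInterval)) :=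
    (qCap_oqm ε).prodMap .id
  rw [← hOQ.continuous_comp_iff]
  have he : FC hε ∘ Prod.map (qCap ε) id = fun p => qCap ε (GS hε p) := by
    funext p
    exact FC_eq hε p.1 p.2
  rw [he]
  exact (qCap_cont ε).comp (GS_cont hε)

/-- the pole as an element of the spherical cap -/
def poleCap (hε : ε = 1 ∨ ε = -1) : ↥(capS ε) :=
  ⟨⟨pole ε, by rw [mem_sphere_zero_iff_norm]; exact norm_pole hε⟩, by
    show -(1/2) < ε * pole ε 3
    rw [pole_apply, if_pos rfl]
    have := eps_sq hε
    nlinarith⟩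

lemma FC_zero (hε : ε = 1 ∨ ε = -1) (u : ↥(capXS ε)) : FC hε (u, 0) = u := by
  obtain ⟨x, rfl⟩ := qCap_surj ε u
  rw [FC_eq]
  congr 1
  apply Subtype.ext
  apply Subtype.ext
  show nitp (x.1 : E4) (pole ε) ((0 : unitInterval) : ℝ) = (x.1 : E4)
  have h0 : ((0 : unitInterval) : ℝ) = 0 := rfl
  rw [h0]
  exact nitp_zero _ _ (unitS3 x.1)

lemma FC_one (hε : ε = 1 ∨ ε = -1) (u : ↥(capXS ε)) :
    FC hε (u, 1) = qCap ε (poleCap hε) := by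
  obtain ⟨x, rfl⟩ := qCap_surj ε u
  rw [FC_eq]
  congr 1
  apply Subtype.ext
  apply Subtype.ext
  show nitp (x.1 : E4) (pole ε) ((1 : unitInterval) : ℝ) = pole ε
  have h1 : ((1 : unitInterval) : ℝ) = 1 := rfl
  rw [h1]
  exact nitp_one _ _ (norm_pole hε)

lemma contractible_capXS (hε : ε = 1 ∨ ε = -1) : ContractibleSpace ↥(capXS ε) := by
  rw [contractible_iff_id_nullhomotopic]
  refine ⟨qCap ε (poleCap hε), ⟨?_⟩⟩
  refine ⟨⟨fun p => FC hε (p.2, p.1), ?_⟩, ?_, ?_⟩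
  · exact (FC_cont hε).comp (continuous_snd.prodMk continuous_fst)
  · intro u
    exact FC_zero hε u
  · intro u
    exact FC_one hε u

end contraction

section band

/-- the band on the sphere -/
def bandS : Set S3 := {x | |(x : E4) 3| < 1/2}

/-- a normalized-interpolation path on the sphere -/
def nitpPath (x y : S3)
    (h : ∀ s : ℝ, 0 ≤ s → s ≤ 1 → 0 < ‖itp (x : E4) (y : E4) s‖) : Path x y where
  toFun s := ⟨nitp (x : E4) (y : E4) s, nitp_mem _ _ (h s s.2.1 s.2.2)⟩
  continuous_toFun := by
    apply Continuous.subtype_mk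
    have hbase : Continuous fun s : unitInterval => itp (x : E4) (y : E4) s := by
      unfold itp
      exact ((continuous_const.sub continuous_subtype_val).smul continuous_const).add
        (continuous_subtype_val.smul continuous_const)
    have hnz : ∀ s : unitInterval, ‖itp (x : E4) (y : E4) (s : ℝ)‖ ≠ 0 :=
      fun s => (h s s.2.1 s.2.2).ne'
    exact (hbase.norm.inv₀ hnz).smul hbase
  source' := Subtype.ext (by
    have h0 : ((0 : unitInterval) : ℝ) = 0 := rfl
    show nitp (x : E4) (y : E4) ((0 : unitInterval) : ℝ) = (x : E4)
    rw [h0]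
    exact nitp_zero _ _ (unitS3 x))
  target' := Subtype.ext (by
    have h1 : ((1 : unitInterval) : ℝ) = 1 := rfl
    show nitp (x : E4) (y : E4) ((1 : unitInterval) : ℝ) = (y : E4)
    rw [h1]
    exact nitp_one _ _ (unitS3 y))

lemma nitpPath_coe (x y : S3) (h) (s : unitInterval) :
    ((nitpPath x y h s : S3) : E4) = nitp (x : E4) (y : E4) s := rfl

/-- joining a band point to its equatorial projection -/
lemma joined_band_of_inner_nonneg (x y : S3) (hx3 : |(x : E4) 3| < 1/2)
    (hy3 : (y : E4) 3 = 0) (hc : 0 ≤ (inner ℝ (x : E4) (y : E4) : ℝ)) :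
    JoinedIn bandS x y := by
  have hpos : ∀ s : ℝ, 0 ≤ s → s ≤ 1 → 0 < ‖itp (x : E4) (y : E4) s‖ :=
    fun s hs0 hs1 => norm_itp_pos _ _ (unitS3 x) (unitS3 y) (by linarith) hs0 hs1
  refine ⟨nitpPath x y hpos, fun t => ?_⟩
  show |((nitpPath x y hpos t : S3) : E4) 3| < 1/2
  have e : ((nitpPath x y hpos t : S3) : E4) 3
      = ‖itp (x : E4) (y : E4) t‖⁻¹ * ((1 - (t:ℝ)) * (x : E4) 3) := by
    rw [nitpPath_coe, nitp_apply, hy3]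
    ring_nf
  rw [e]
  set nv := ‖itp (x : E4) (y : E4) (t : ℝ)‖ with hnv
  have hvpos : 0 < nv := hpos t t.2.1 t.2.2
  apply abs_ratio_lt_half hvpos
  have hvsq : nv^2 = (1-(t:ℝ))^2 + (t:ℝ)^2 + 2*(t:ℝ)*(1-(t:ℝ))*(inner ℝ (x:E4) (y:E4) : ℝ) :=
    norm_itp_sq _ _ (unitS3 x) (unitS3 y) _
  have ht0 : (0:ℝ) ≤ (t:ℝ) := t.2.1
  have ht1 : (t:ℝ) ≤ 1 := t.2.2
  have hx3' : ((x:E4) 3)^2 < 1/4 := by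
    have := abs_nonneg ((x:E4) 3)
    nlinarith [sq_abs ((x:E4) 3)]
  rw [hvsq]
  rcases lt_or_eq_of_le ht1 with h | h
  · nlinarith [mul_nonneg (mul_nonneg ht0 (by linarith : (0:ℝ) ≤ 1 - (t:ℝ))) hc,
      mul_pos (mul_pos (sub_pos.2 h) (sub_pos.2 h)) (show (0:ℝ) < 1 - 4*((x:E4) 3)^2 by nlinarith)]
  · rw [h]
    norm_num

/-- joining two equatorial points through the equator -/
lemma joined_equator (x y : S3) (hx3 : (x : E4) 3 = 0) (hy3 : (y : E4) 3 = 0)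
    (hc : -1 < (inner ℝ (x : E4) (y : E4) : ℝ)) : JoinedIn bandS x y := by
  have hpos : ∀ s : ℝ, 0 ≤ s → s ≤ 1 → 0 < ‖itp (x : E4) (y : E4) s‖ :=
    fun s hs0 hs1 => norm_itp_pos _ _ (unitS3 x) (unitS3 y) hc hs0 hs1
  refine ⟨nitpPath x y hpos, fun t => ?_⟩
  show |((nitpPath x y hpos t : S3) : E4) 3| < 1/2
  rw [nitpPath_coe, nitp_apply, hx3, hy3]
  norm_num

/-- the base point on the equator -/
def eqPt (i : Fin 4) : S3 :=
  ⟨EuclideanSpace.single i 1, by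
    rw [mem_sphere_zero_iff_norm, EuclideanSpace.norm_single]
    norm_num⟩

lemma eqPt_coord (i j : Fin 4) : ((eqPt i : S3) : E4) j = if j = i then 1 else 0 :=
  EuclideanSpace.single_apply _ _ _

lemma bandS_pathConnected : IsPathConnected bandS := by
  have hE0 : eqPt 0 ∈ bandS := by
    show |((eqPt 0 : S3) : E4) 3| < 1/2
    rw [eqPt_coord, if_neg (by decide : ¬((3:Fin 4) = 0))]
    norm_num
  refine ⟨eqPt 0, hE0, fun {y} hy => ?_⟩
  -- join y to its equatorial projection, then to eqPt 0, then take symm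
  suffices h : JoinedIn bandS y (eqPt 0) by exact h.symm
  have hy3 : |(y : E4) 3| < 1/2 := hy
  -- the equatorial projection
  set w : E4 := (y : E4) - EuclideanSpace.single 3 ((y : E4) 3) with hw
  have hw3 : w 3 = 0 := by
    simp [hw, EuclideanSpace.single_apply]
  have hinn_ys : (inner ℝ (y : E4) (EuclideanSpace.single 3 ((y:E4) 3) : E4) : ℝ)
      = ((y:E4) 3)^2 := by
    rw [EuclideanSpace.inner_single_right]
    simp [sq]
  have hnormw : ‖w‖^2 = 1 - ((y:E4) 3)^2 := by
    rw [hw, @norm_sub_sq_real, hinn_ys, EuclideanSpace.norm_single, unitS3 y,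
      Real.norm_eq_abs, sq_abs]
    ring
  have hy3sq : ((y:E4) 3)^2 < 1/4 := by
    nlinarith [sq_abs ((y:E4) 3), abs_nonneg ((y:E4) 3)]
  have hwpos : 0 < ‖w‖ := by
    have h2 : 0 < ‖w‖^2 := by rw [hnormw]; nlinarith
    nlinarith [norm_nonneg w]
  have hwne : w ≠ 0 := by
    intro h0
    rw [h0, norm_zero] at hwpos
    exact lt_irrefl _ hwpos
  set z : S3 := ⟨‖w‖⁻¹ • w, by
    rw [mem_sphere_zero_iff_norm]
    exact norm_smul_inv_norm hwne⟩ with hz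
  have hz3 : (z : E4) 3 = 0 := by
    show (‖w‖⁻¹ • w) 3 = 0
    rw [PiLp.smul_apply, hw3, smul_eq_mul, mul_zero]
  have hinner_yz : (inner ℝ (y : E4) (z : E4) : ℝ) = ‖w‖ := by
    show (inner ℝ (y : E4) (‖w‖⁻¹ • w) : ℝ) = ‖w‖
    rw [real_inner_smul_right]
    have hyw : (inner ℝ (y : E4) w : ℝ) = 1 - ((y:E4) 3)^2 := by
      rw [hw, inner_sub_right, hinn_ys, real_inner_self_eq_norm_sq, unitS3 y]
      norm_num
    rw [hyw, ← hnormw, pow_two, ← mul_assoc, inv_mul_cancel₀ hwpos.ne', one_mul]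
  have step1 : JoinedIn bandS y z :=
    joined_band_of_inner_nonneg y z hy3 hz3 (by rw [hinner_yz]; exact hwpos.le)
  have heq0 : ((eqPt 0 : S3) : E4) 3 = 0 := by
    rw [eqPt_coord, if_neg (by decide : ¬((3:Fin 4) = 0))]
  have heq1 : ((eqPt 1 : S3) : E4) 3 = 0 := by
    rw [eqPt_coord, if_neg (by decide : ¬((3:Fin 4) = 1))]
  have hzinner : -1 ≤ (inner ℝ (z : E4) ((eqPt 0 : S3) : E4) : ℝ) := by
    have h1 := abs_real_inner_le_norm (z : E4) ((eqPt 0 : S3) : E4)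
    rw [unitS3 z, unitS3 (eqPt 0), one_mul] at h1
    linarith [(abs_le.1 h1).1]
  have step2 : JoinedIn bandS z (eqPt 0) := by
    rcases lt_or_eq_of_le hzinner with h | h
    · exact joined_equator z (eqPt 0) hz3 heq0 h
    · -- inner = -1 : z = -eqPt 0, go through eqPt 1
      have hns : ‖(z : E4) + ((eqPt 0 : S3) : E4)‖^2 = 0 := by
        rw [@norm_add_sq_real, unitS3 z, unitS3 (eqPt 0), ← h]
        norm_num
      have hsum : (z : E4) + ((eqPt 0 : S3) : E4) = 0 :=
        norm_eq_zero.1 ((pow_eq_zero_iff (by norm_num : (2:ℕ) ≠ 0)).1 hns)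
      have hzeq : (z : E4) = -((eqPt 0 : S3) : E4) := eq_neg_of_add_eq_zero_left hsum
      have hi01 : (inner ℝ ((eqPt 0 : S3) : E4) ((eqPt 1 : S3) : E4) : ℝ) = 0 := by
        show (inner ℝ (EuclideanSpace.single 0 (1:ℝ)) ((eqPt 1 : S3) : E4) : ℝ) = 0
        rw [EuclideanSpace.inner_single_left]
        rw [eqPt_coord, if_neg (by decide : ¬((0:Fin 4) = 1))]
        simp
      have j1 : JoinedIn bandS z (eqPt 1) := by
        apply joined_equator z (eqPt 1) hz3 heq1
        rw [hzeq, inner_neg_left, hi01]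
        norm_num
      have j2 : JoinedIn bandS (eqPt 1) (eqPt 0) := by
        apply joined_equator (eqPt 1) (eqPt 0) heq1 heq0
        have : (inner ℝ ((eqPt 1 : S3) : E4) ((eqPt 0 : S3) : E4) : ℝ) = 0 := by
          show (inner ℝ (EuclideanSpace.single 1 (1:ℝ)) ((eqPt 0 : S3) : E4) : ℝ) = 0
          rw [EuclideanSpace.inner_single_left]
          rw [eqPt_coord, if_neg (by decide : ¬((1:Fin 4) = 0))]
          simp
        rw [this]
        norm_num
      exact j1.trans j2
  exact step1.trans step2

end band

end XSP

/-- The quotient `X_S = S³ / ι` is simply connected. -/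
theorem XS_simplyConnected : SimplyConnectedSpace XS := by
  have h1 : ∀ ε : ℝ, (ε = 1 ∨ ε = -1) → SimplyConnectedSpace ↥(XSP.capXS ε) := by
    intro ε hε
    haveI := XSP.contractible_capXS hε
    infer_instance
  apply simplyConnectedSpace_of_cover (XSP.isOpen_capXS 1) (XSP.isOpen_capXS (-1)) ?cover
    (h1 1 (Or.inl rfl)) (h1 (-1) (Or.inr rfl)) ?inter
  case cover =>
    ext u
    simp only [Set.mem_union, Set.mem_univ, iff_true]
    by_cases h : -(1/2) < XSP.h4 u
    · left
      show -(1/2) < 1 * XSP.h4 u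
      linarith
    · right
      show -(1/2) < -1 * XSP.h4 u
      push_neg at h
      linarith
  case inter =>
    have he : XSP.capXS 1 ∩ XSP.capXS (-1)
        = (Quot.mk (fun p q : S3 => sphereInv p = q)) '' XSP.bandS := by
      ext u
      constructor
      · rintro ⟨hu1, hu2⟩
        obtain ⟨x, rfl⟩ := Quot.exists_rep u
        refine ⟨x, ?_, rfl⟩
        show |(x : EuclideanSpace ℝ (Fin 4)) 3| < 1/2
        have h1' : -(1/2) < 1 * ((x : EuclideanSpace ℝ (Fin 4)) 3) := hu1
        have h2' : -(1/2) < -1 * ((x : EuclideanSpace ℝ (Fin 4)) 3) := hu2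
        rw [abs_lt]
        constructor <;> linarith
      · rintro ⟨x, hx, rfl⟩
        have hx' : |(x : EuclideanSpace ℝ (Fin 4)) 3| < 1/2 := hx
        rw [abs_lt] at hx'
        constructor
        · show -(1/2) < 1 * ((x : EuclideanSpace ℝ (Fin 4)) 3)
          linarith [hx'.1]
        · show -(1/2) < -1 * ((x : EuclideanSpace ℝ (Fin 4)) 3)
          linarith [hx'.2]
    rw [he]
    exact XSP.bandS_pathConnected.image continuous_quot_mk
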